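/- Let (T, η, μ) be a BC monad on the category of sets, i.e. T preserves weak pullbacks and μ is weakly cartesian. Then for every T-algebra (A, e : TA → A), the partial evaluation relation on TA is transitive. More precisely, if τ₀₁ ∈ TTA satisfies μ_A(τ₀₁) = t₀, (Te)(τ₀₁) = t₁ and τ₁₂ ∈ TTA satisfies μ_A(τ₁₂) = t₁, (Te)(τ₁₂) = t₂, then there exists Θ ∈ TTTA with μ_{TA}(Θ) = τ₀₁ and (TTe)(Θ) = τ₁₂, and the element τ₀₂ := (Tμ_A)(Θ) satisfies μ_A(τ₀₂) = t₀ and (Te)(τ₀₂) = t₂. -/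

import Mathlib

open CategoryTheory

universe u

/-- For a BC monad (the functor preserves weak pullbacks and the multiplication is
weakly cartesian), the partial evaluation relation of any algebra is transitive,
with composite witness `(Tμ)(Θ)` for a composition strategy `Θ`. -/
theorem partial_evaluations_compose_of_BC
    (T : CategoryTheory.Monad (Type u))
    (hT : ∀ {A B C D : Type u} (f : A → B) (g : A → C) (m : B → D) (n : C → D),
      (∀ a, m (f a) = n (g a)) →
      (∀ (b : B) (c : C), m b = n c → ∃ a : A, f a = b ∧ g a = c) →
      ∀ (b : T.obj B) (c : T.obj C), T.map (TypeCat.ofHom m) b = T.map (TypeCat.ofHom n) c →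
        ∃ a : T.obj A, T.map (TypeCat.ofHom f) a = b ∧ T.map (TypeCat.ofHom g) a = c)
    (hμ : ∀ {X Y : Type u} (f : X → Y) (u : T.obj X) (v : T.obj (T.obj Y)),
      T.map (TypeCat.ofHom f) u = T.μ.app Y v →
        ∃ w : T.obj (T.obj X), T.μ.app X w = u ∧ T.map (T.map (TypeCat.ofHom f)) w = v)
    (A : T.Algebra) (t₀ t₁ t₂ : T.obj A.A)
    (τ₀₁ τ₁₂ : T.obj (T.obj A.A))
    (h₀₁ : T.μ.app A.A τ₀₁ = t₀) (h₁₁ : T.map A.a τ₀₁ = t₁)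
    (h₁₂ : T.μ.app A.A τ₁₂ = t₁) (h₂₂ : T.map A.a τ₁₂ = t₂) :
    ∃ Θ : T.obj (T.obj (T.obj A.A)),
      T.μ.app (T.obj A.A) Θ = τ₀₁ ∧
      T.map (T.map A.a) Θ = τ₁₂ ∧
      T.μ.app A.A (T.map (T.μ.app A.A) Θ) = t₀ ∧
      T.map A.a (T.map (T.μ.app A.A) Θ) = t₂ := by
  obtain ⟨Θ, hΘ1, hΘ2⟩ := hμ A.a τ₀₁ τ₁₂ (h₁₁.trans h₁₂.symm)
  refine ⟨Θ, hΘ1, hΘ2, ?_, ?_⟩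
  · have h := ConcreteCategory.congr_hom (T.assoc A.A) Θ
    simp only [CategoryTheory.types_comp_apply] at h
    rw [h, hΘ1, h₀₁]
  · have halg : T.map A.a ∘ T.map (T.μ.app A.A) = T.map A.a ∘ T.map (T.map A.a) := by
      simp only [← CategoryTheory.types_comp, ← T.toFunctor.map_comp, A.assoc]
    have := congr_fun halg Θ
    simp only [Function.comp_apply] at this
    rw [this, (show T.map (T.map A.a) Θ = τ₁₂ from hΘ2), h₂₂]
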